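/- For every real λ with |λ| > 2, one has λ²/4 − ∫_{−2}^{2} log|λ − s| · (1/(2π))√(4 − s²) ds = (1/2)V(λ) + 1/2, where V(λ) = ∫₀^{|λ|} √(max(s²−4,0)) ds; in particular the left-hand side exceeds the constant value 1/2 attained on [−2,2]. -/

import Mathlib

open Real Filter Set MeasureTheory intervalIntegral
open scoped Topology

/-- The GUE effective potential `V(λ) = ∫₀^{|λ|} √(max(s²−4,0)) ds`. -/
noncomputable def V (l : ℝ) : ℝ := ∫ s in (0 : ℝ)..|l|, Real.sqrt (max (s ^ 2 - 4) 0)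



lemma sq4_pos {l : ℝ} (hl : 2 < l) : 0 < l ^ 2 - 4 := by nlinarith
lemma sqrtR_pos {l : ℝ} (hl : 2 < l) : 0 < Real.sqrt (l ^ 2 - 4) := Real.sqrt_pos.2 (sq4_pos hl)
lemma sqrtR_lt {l : ℝ} (hl : 2 < l) : Real.sqrt (l ^ 2 - 4) < l :=
  (Real.sqrt_lt' (by linarith)).2 (by nlinarith)
lemma sqR {l : ℝ} (hl : 2 < l) : Real.sqrt (l ^ 2 - 4) ^ 2 = l ^ 2 - 4 :=
  Real.sq_sqrt (sq4_pos hl).le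

lemma sqrt_four : Real.sqrt 4 = 2 := by
  rw [show (4:ℝ) = 2 ^ 2 by norm_num, Real.sqrt_sq (by norm_num)]

lemma stieltjes {l : ℝ} (hl : 2 < l) :
    ∫ s in (-2:ℝ)..2, Real.sqrt (4 - s ^ 2) / (l - s)
      = π * (l - Real.sqrt (l ^ 2 - 4)) := by
  have hRpos := sqrtR_pos hl
  have hRsq := sqR hl
  set R := Real.sqrt (l ^ 2 - 4) with hRdef
  set h : ℝ → ℝ := fun s => (4 - l * s) / (2 * (l - s)) with hh
  set F : ℝ → ℝ := fun s =>
    l * Real.arcsin (s / 2) - Real.sqrt (4 - s ^ 2) + R * Real.arcsin (h s) with hFdef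
  have hdenpos : ∀ s ∈ Icc (-2:ℝ) 2, 0 < l - s := fun s hs => by
    have := hs.2; linarith
  have hcontF : ContinuousOn F (Icc (-2:ℝ) 2) := by
    apply ContinuousOn.add
    · exact (continuousOn_const.mul
        (Real.continuous_arcsin.comp (continuous_id.div_const 2)).continuousOn).sub
        ((Real.continuous_sqrt.comp (by fun_prop)).continuousOn)
    · exact continuousOn_const.mul (Real.continuous_arcsin.comp_continuousOn
        (ContinuousOn.div (by fun_prop) (by fun_prop) (fun s hs => (mul_pos two_pos (hdenpos s hs)).ne')))
  have hderiv : ∀ x ∈ Ioo (-2:ℝ) 2,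
      HasDerivAt F (Real.sqrt (4 - x ^ 2) / (l - x)) x := by
    intro x hx
    have hx1 : -2 < x := hx.1
    have hx2 : x < 2 := hx.2
    have hlx : 0 < l - x := by linarith
    have h4 : 0 < 4 - x ^ 2 := by nlinarith
    have hQpos : 0 < Real.sqrt (4 - x ^ 2) := Real.sqrt_pos.2 h4
    have hQsq : Real.sqrt (4 - x ^ 2) ^ 2 = 4 - x ^ 2 := Real.sq_sqrt h4.le
    set Q := Real.sqrt (4 - x ^ 2) with hQdef
    -- piece 1 : l * arcsin (s/2)
    have d1 : HasDerivAt (fun s : ℝ => l * Real.arcsin (s / 2)) (l / Q) x := by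
      have hbase : HasDerivAt (fun s : ℝ => Real.arcsin (s / 2))
          (1 / Real.sqrt (1 - (x / 2) ^ 2) * (2⁻¹)) x := by
        have := (Real.hasDerivAt_arcsin (x := x / 2) (by intro hc; nlinarith [hc]) (by intro hc; nlinarith [hc])).comp x
          ((hasDerivAt_id x).div_const 2)
        exact this.congr_deriv (by simp)
      have e1 : Real.sqrt (1 - (x / 2) ^ 2) = Q / 2 := by
        rw [show 1 - (x / 2) ^ 2 = (4 - x ^ 2) / 4 by ring, Real.sqrt_div h4.le, sqrt_four]
      have := hbase.const_mul l
      refine this.congr_deriv (Eq.symm ?_)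
      rw [e1]
      field_simp
    -- piece 2 : sqrt (4 - s^2)
    have d2 : HasDerivAt (fun s : ℝ => Real.sqrt (4 - s ^ 2)) (-x / Q) x := by
      have hinner : HasDerivAt (fun s : ℝ => 4 - s ^ 2) (-(2 * x)) x := by
        exact ((hasDerivAt_const x (4:ℝ)).sub (hasDerivAt_pow 2 x)).congr_deriv (by simp)
      have := hinner.sqrt h4.ne'
      refine this.congr_deriv (Eq.symm ?_)
      rw [← hQdef]
      field_simp
    -- piece 3 : R * arcsin (h s)
    have d3 : HasDerivAt (fun s : ℝ => R * Real.arcsin (h s))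
        (-((l ^ 2 - 4) / (Q * (l - x)))) x := by
      have hhd : HasDerivAt h (-((l ^ 2 - 4) / (2 * (l - x) ^ 2))) x := by
        have dnum : HasDerivAt (fun s : ℝ => 4 - l * s) (-l) x := by
          exact ((hasDerivAt_const x (4:ℝ)).sub ((hasDerivAt_id x).const_mul l)).congr_deriv (by simp)
        have dden : HasDerivAt (fun s : ℝ => 2 * (l - s)) (-2) x := by
          simpa using (((hasDerivAt_const x l).sub (hasDerivAt_id x)).const_mul 2)
        have := dnum.div dden (mul_pos two_pos hlx).ne'
        refine this.congr_deriv (Eq.symm ?_)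
        field_simp
        ring
      have hsq : 1 - h x ^ 2 = (l ^ 2 - 4) * (4 - x ^ 2) / (2 * (l - x)) ^ 2 := by
        rw [hh]; field_simp; ring
      have hsqpos : 0 < 1 - h x ^ 2 := by
        rw [hsq]; exact div_pos (mul_pos (sq4_pos hl) h4) (by positivity)
      have hne1 : h x ≠ -1 := by intro hc; rw [hc] at hsqpos; norm_num at hsqpos
      have hne2 : h x ≠ 1 := by intro hc; rw [hc] at hsqpos; norm_num at hsqpos
      have harc := (Real.hasDerivAt_arcsin hne1 hne2).comp x hhd
      have e2 : Real.sqrt (1 - h x ^ 2) = R * Q / (2 * (l - x)) := by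
        rw [hsq, Real.sqrt_div (mul_pos (sq4_pos hl) h4).le, Real.sqrt_mul (sq4_pos hl).le,
          Real.sqrt_sq (mul_pos two_pos hlx).le]
      have := harc.const_mul R
      refine this.congr_deriv (Eq.symm ?_)
      rw [e2]
      field_simp
    have := (d1.sub d2).add d3
    refine this.congr_deriv (Eq.symm ?_)
    field_simp
    linear_combination hQsq
  have hint : IntervalIntegrable (fun s => Real.sqrt (4 - s ^ 2) / (l - s)) volume (-2) 2 := by
    apply ContinuousOn.intervalIntegrable
    rw [uIcc_of_le (by norm_num)]
    exact ContinuousOn.div (by fun_prop) (by fun_prop)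
      (fun s hs => (hdenpos s hs).ne')
  have := intervalIntegral.integral_eq_sub_of_hasDeriv_right_of_le (by norm_num) hcontF
    (fun x hx => (hderiv x hx).hasDerivWithinAt) hint
  rw [this]
  have hF2 : F 2 = l * (π / 2) - R * (π / 2) := by
    have h2 : h 2 = -1 := by
      show (4 - l * 2) / (2 * (l - 2)) = -1
      rw [div_eq_iff (by nlinarith : (2:ℝ) * (l - 2) ≠ 0)]; ring
    simp only [hFdef, h2]
    rw [show (4:ℝ) - 2 ^ 2 = 0 by norm_num, Real.sqrt_zero,
      show (2:ℝ) / 2 = 1 by norm_num, Real.arcsin_one, Real.arcsin_neg_one]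
    ring
  have hFm2 : F (-2) = -(l * (π / 2)) + R * (π / 2) := by
    have h2 : h (-2) = 1 := by
      show (4 - l * (-2)) / (2 * (l - (-2))) = 1
      rw [div_eq_iff (by nlinarith : (2:ℝ) * (l - (-2)) ≠ 0)]; ring
    simp only [hFdef, h2]
    rw [show (4:ℝ) - (-2) ^ 2 = 0 by norm_num, Real.sqrt_zero,
      show (-2:ℝ) / 2 = -1 by norm_num, Real.arcsin_neg_one, Real.arcsin_one]
    ring
  rw [hF2, hFm2]; ring

lemma area_semicircle : ∫ s in (-2:ℝ)..2, Real.sqrt (4 - s ^ 2) = 2 * π := by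
  have h := intervalIntegral.integral_comp_mul_left (a := (-1:ℝ)) (b := 1)
    (f := fun s => Real.sqrt (4 - s ^ 2)) (c := 2) two_ne_zero
  have h2 : (∫ x in (-1:ℝ)..1, Real.sqrt (4 - (2 * x) ^ 2)) = π := by
    rw [intervalIntegral.integral_congr (g := fun x : ℝ => 2 * Real.sqrt (1 - x ^ 2))
      (fun x _ => by
        rw [show (4:ℝ) - (2 * x) ^ 2 = 4 * (1 - x ^ 2) by ring,
          Real.sqrt_mul (by norm_num), sqrt_four])]
    rw [intervalIntegral.integral_const_mul, integral_sqrt_one_sub_sq]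
    ring
  rw [h2] at h
  norm_num at h
  linarith

lemma phi_hasDeriv {l : ℝ} (hl : 2 < l) :
    HasDerivAt (fun x => ∫ s in (-2:ℝ)..2, Real.log (x - s) * Real.sqrt (4 - s ^ 2))
      (π * (l - Real.sqrt (l ^ 2 - 4))) l := by
  set ε := (l - 2) / 2 with hε
  have hε_pos : 0 < ε := by simp only [hε]; linarith
  have hsm : Measurable fun s : ℝ => Real.sqrt (4 - s ^ 2) := by fun_prop
  have hxt : ∀ x ∈ Metric.ball l ε, ∀ t ∈ Set.uIoc (-2:ℝ) 2, ε ≤ x - t := by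
    intro x hx t ht
    rw [Metric.mem_ball, Real.dist_eq, abs_lt] at hx
    rw [Set.uIoc_of_le (by norm_num : (-2:ℝ) ≤ 2)] at ht
    have := ht.2
    simp only [hε] at hx ⊢
    linarith [hx.1]
  have key := intervalIntegral.hasDerivAt_integral_of_dominated_loc_of_deriv_le
    (F := fun x s => Real.log (x - s) * Real.sqrt (4 - s ^ 2))
    (F' := fun x s => 1 / (x - s) * Real.sqrt (4 - s ^ 2))
    (x₀ := l) (a := -2) (b := 2) (μ := volume) (bound := fun _ => 1 / ε * 2)
    (Metric.ball_mem_nhds l hε_pos)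
    (Filter.Eventually.of_forall fun x =>
      ((Real.measurable_log.comp (measurable_const.sub measurable_id)).mul
        hsm).aestronglyMeasurable)
    (ContinuousOn.intervalIntegrable (by
      rw [uIcc_of_le (by norm_num : (-2:ℝ) ≤ 2)]
      apply ContinuousOn.mul
      · apply ContinuousOn.log
        · fun_prop
        · intro s hs
          have := hs.2
          have : 0 < l - s := by linarith
          exact this.ne'
      · fun_prop))
    ((measurable_const.div (measurable_const.sub measurable_id)).mul
        hsm).aestronglyMeasurable
    (Filter.Eventually.of_forall fun t => fun ht x hx => by
      have h1 : ε ≤ x - t := hxt x hx t ht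
      have h2 : 0 < x - t := lt_of_lt_of_le hε_pos h1
      rw [norm_mul, Real.norm_eq_abs, Real.norm_eq_abs,
        abs_of_pos (by positivity : (0:ℝ) < 1 / (x - t)), abs_of_nonneg (Real.sqrt_nonneg _)]
      apply mul_le_mul
      · rw [div_le_div_iff₀ h2 hε_pos]; linarith
      · calc Real.sqrt (4 - t ^ 2) ≤ Real.sqrt 4 := Real.sqrt_le_sqrt (by nlinarith)
          _ = 2 := sqrt_four
      · exact Real.sqrt_nonneg _
      · positivity)
    intervalIntegrable_const
    (Filter.Eventually.of_forall fun t => fun ht x hx => by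
      have h2 : 0 < x - t := lt_of_lt_of_le hε_pos (hxt x hx t ht)
      exact (((hasDerivAt_id x).sub_const t).log h2.ne').mul_const _)
  have heq : (∫ s in (-2:ℝ)..2, 1 / (l - s) * Real.sqrt (4 - s ^ 2))
      = π * (l - Real.sqrt (l ^ 2 - 4)) := by
    rw [intervalIntegral.integral_congr
      (g := fun s => Real.sqrt (4 - s ^ 2) / (l - s)) (fun s _ => by ring)]
    exact stieltjes hl
  rw [heq] at key
  exact key.2

lemma sqrt_fun_hasDeriv {l : ℝ} (hl : 2 < l) :
    HasDerivAt (fun x : ℝ => Real.sqrt (x ^ 2 - 4)) (l / Real.sqrt (l ^ 2 - 4)) l := by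
  have hRpos := sqrtR_pos hl
  have hinner : HasDerivAt (fun x : ℝ => x ^ 2 - 4) (2 * l) l := by
    simpa using (hasDerivAt_pow 2 l).sub_const 4
  have := hinner.sqrt (sq4_pos hl).ne'
  refine this.congr_deriv (Eq.symm ?_)
  field_simp

lemma Cfun_hasDeriv {l : ℝ} (hl : 2 < l) :
    HasDerivAt (fun x : ℝ => π * x ^ 2 / 2 - π * x * Real.sqrt (x ^ 2 - 4) / 2
      + 2 * π * Real.log ((x + Real.sqrt (x ^ 2 - 4)) / 2) - π)
      (π * (l - Real.sqrt (l ^ 2 - 4))) l := by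
  have hRpos := sqrtR_pos hl
  have hRsq := sqR hl
  set R := Real.sqrt (l ^ 2 - 4) with hRdef
  have hRlt := sqrtR_lt hl
  have dsq := sqrt_fun_hasDeriv hl
  have d1 : HasDerivAt (fun x : ℝ => π * x ^ 2 / 2) (π * l) l := by
    have := ((hasDerivAt_pow 2 l).const_mul π).div_const 2
    refine this.congr_deriv (Eq.symm ?_)
    ring
  have d2 : HasDerivAt (fun x : ℝ => π * x * Real.sqrt (x ^ 2 - 4) / 2)
      ((π * R + π * l * (l / R)) / 2) l := by
    have hx : HasDerivAt (fun x : ℝ => π * x) π l := by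
      simpa using (hasDerivAt_id l).const_mul π
    exact (hx.mul dsq).div_const 2
  have d3 : HasDerivAt (fun x : ℝ => 2 * π * Real.log ((x + Real.sqrt (x ^ 2 - 4)) / 2))
      (2 * π * ((1 + l / R) / 2 / ((l + R) / 2))) l := by
    have hpos : (0:ℝ) < (l + R) / 2 := by positivity
    have hinner : HasDerivAt (fun x : ℝ => (x + Real.sqrt (x ^ 2 - 4)) / 2)
        ((1 + l / R) / 2) l := ((hasDerivAt_id l).add dsq).div_const 2
    exact (hinner.log hpos.ne').const_mul (2 * π)
  have := ((d1.sub d2).add d3).sub_const π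
  refine this.congr_deriv (Eq.symm ?_)
  have hlR : l + R ≠ 0 := by positivity
  field_simp
  linear_combination (-R - l) * hRsq

lemma phi_eq {l : ℝ} (hl : 2 < l) :
    (∫ s in (-2:ℝ)..2, Real.log (l - s) * Real.sqrt (4 - s ^ 2))
      = π * l ^ 2 / 2 - π * l * Real.sqrt (l ^ 2 - 4) / 2
        + 2 * π * Real.log ((l + Real.sqrt (l ^ 2 - 4)) / 2) - π := by
  set Φ : ℝ → ℝ := fun x => ∫ s in (-2:ℝ)..2, Real.log (x - s) * Real.sqrt (4 - s ^ 2)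
    with hΦ
  set C : ℝ → ℝ := fun x => π * x ^ 2 / 2 - π * x * Real.sqrt (x ^ 2 - 4) / 2
        + 2 * π * Real.log ((x + Real.sqrt (x ^ 2 - 4)) / 2) - π with hC
  set D : ℝ → ℝ := fun x => Φ x - C x with hD
  have hDderiv : ∀ x, 2 < x → HasDerivAt D 0 x := by
    intro x hx
    have := (phi_hasDeriv hx).sub (Cfun_hasDeriv hx)
    exact this.congr_deriv (by simp)
  -- D is constant on (2, ∞)
  have hconst : ∀ x, l ≤ x → D x = D l := by
    intro x hx
    have hcont : ContinuousOn D (Icc l x) := fun y hy =>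
      ((hDderiv y (lt_of_lt_of_le hl hy.1)).differentiableAt.continuousAt).continuousWithinAt
    have := constant_of_has_deriv_right_zero hcont (fun y hy =>
      (hDderiv y (lt_of_lt_of_le hl hy.1)).hasDerivWithinAt)
    exact this x ⟨hx, le_rfl⟩
  -- limit of Φ x - 2π log x at infinity is 0
  have T1 : Tendsto (fun x => Φ x - 2 * π * Real.log x) atTop (𝓝 0) := by
    apply squeeze_zero_norm' (a := fun x : ℝ => 32 / x)
    · filter_upwards [eventually_ge_atTop (4:ℝ)] with x hx
      have hx0 : (0:ℝ) < x := by linarith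
      have hsub : Φ x - 2 * π * Real.log x
          = ∫ s in (-2:ℝ)..2, (Real.log (x - s) - Real.log x) * Real.sqrt (4 - s ^ 2) := by
        have hi1 : IntervalIntegrable (fun s => Real.log (x - s) * Real.sqrt (4 - s ^ 2))
            volume (-2) 2 := by
          apply ContinuousOn.intervalIntegrable
          rw [uIcc_of_le (by norm_num : (-2:ℝ) ≤ 2)]
          apply ContinuousOn.mul
          · refine ContinuousOn.log (by fun_prop) (fun s hs => ?_)
            have h2 : s ≤ 2 := hs.2
            have h3 : 0 < x - s := by linarith
            exact h3.ne'
          · fun_prop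
        have hi2 : IntervalIntegrable (fun s => Real.log x * Real.sqrt (4 - s ^ 2))
            volume (-2) 2 := (Continuous.intervalIntegrable (by fun_prop) _ _)
        rw [show (fun s : ℝ => (Real.log (x - s) - Real.log x) * Real.sqrt (4 - s ^ 2))
            = fun s : ℝ => Real.log (x - s) * Real.sqrt (4 - s ^ 2)
              - Real.log x * Real.sqrt (4 - s ^ 2) by funext s; ring]
        rw [intervalIntegral.integral_sub hi1 hi2, intervalIntegral.integral_const_mul,
          area_semicircle]
        simp only [hΦ]
        ring
      rw [hsub]
      have hbd := intervalIntegral.norm_integral_le_of_norm_le_const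
        (C := 8 / x) (a := (-2:ℝ)) (b := 2)
        (f := fun s => (Real.log (x - s) - Real.log x) * Real.sqrt (4 - s ^ 2)) ?_
      · calc ‖∫ s in (-2:ℝ)..2, (Real.log (x - s) - Real.log x) * Real.sqrt (4 - s ^ 2)‖
            ≤ 8 / x * |(2:ℝ) - (-2)| := hbd
          _ = 32 / x := by rw [show |(2:ℝ) - (-2)| = 4 by norm_num]; ring
      · intro s hs
        rw [Set.uIoc_of_le (by norm_num : (-2:ℝ) ≤ 2)] at hs
        have hs1 : -2 < s := hs.1
        have hs2 : s ≤ 2 := hs.2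
        have hxs : 0 < x - s := by linarith
        have hlog : |Real.log (x - s) - Real.log x| ≤ 4 / x := by
          rw [← Real.log_div hxs.ne' hx0.ne']
          set y := (x - s) / x with hy
          have hy1 : 1 - 2 / x ≤ y := by
            rw [hy, le_div_iff₀ hx0, sub_mul, div_mul_cancel₀ _ hx0.ne']
            linarith
          have hy2 : y ≤ 1 + 2 / x := by
            rw [hy, div_le_iff₀ hx0, add_mul, div_mul_cancel₀ _ hx0.ne']
            linarith
          have hypos : 0 < y := by
            have : (0:ℝ) < 1 - 2 / x := by
              rw [sub_pos, div_lt_one hx0]; linarith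
            linarith
          rw [abs_le]
          constructor
          · -- -(4/x) ≤ log y :  log y = -log (1/y) ≥ -(1/y - 1)
            have h1 : Real.log y⁻¹ ≤ y⁻¹ - 1 := Real.log_le_sub_one_of_pos (by positivity)
            rw [Real.log_inv] at h1
            have hyhalf : 1 / 2 ≤ y := by
              have : 2 / x ≤ 1 / 2 := by rw [div_le_div_iff₀ hx0 (by norm_num)]; linarith
              linarith
            have hxy : x - 2 ≤ y * x := by
              have h5 := mul_le_mul_of_nonneg_right hy1 hx0.le
              rw [sub_mul, one_mul, div_mul_cancel₀ _ hx0.ne'] at h5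
              linarith
            have : y⁻¹ - 1 ≤ 4 / x := by
              rw [inv_eq_one_div, div_sub' hypos.ne', div_le_div_iff₀ hypos hx0]
              nlinarith [hxy, hyhalf]
            linarith
          · have h2 : Real.log y ≤ y - 1 := Real.log_le_sub_one_of_pos hypos
            have : y - 1 ≤ 2 / x := by linarith
            have h4 : (2:ℝ) / x ≤ 4 / x := by gcongr <;> norm_num
            linarith [this, h2]
        rw [norm_mul, Real.norm_eq_abs, Real.norm_eq_abs,
          abs_of_nonneg (Real.sqrt_nonneg _)]
        calc |Real.log (x - s) - Real.log x| * Real.sqrt (4 - s ^ 2)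
            ≤ (4 / x) * 2 := by
              apply mul_le_mul hlog ?_ (Real.sqrt_nonneg _) (by positivity)
              calc Real.sqrt (4 - s ^ 2) ≤ Real.sqrt 4 := Real.sqrt_le_sqrt (by nlinarith)
                _ = 2 := sqrt_four
          _ = 8 / x := by ring
    · exact tendsto_const_nhds.div_atTop tendsto_id
  -- limit of C x - 2π log x at infinity
  have hg : Tendsto (fun x : ℝ => Real.sqrt (1 - 4 / x ^ 2)) atTop (𝓝 1) := by
    have h0 : Tendsto (fun x : ℝ => 4 / x ^ 2) atTop (𝓝 0) :=
      tendsto_const_nhds.div_atTop (tendsto_pow_atTop (by norm_num))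
    have h1 : Tendsto (fun x : ℝ => 1 - 4 / x ^ 2) atTop (𝓝 1) := by
      simpa using tendsto_const_nhds.sub h0
    have := (Real.continuous_sqrt.tendsto 1).comp h1
    simpa [Function.comp_def] using this
  have T2 : Tendsto (fun x => C x - 2 * π * Real.log x) atTop (𝓝 0) := by
    have hA : Tendsto (fun x : ℝ => 2 * π / (1 + Real.sqrt (1 - 4 / x ^ 2))) atTop (𝓝 π) := by
      have h3 := (tendsto_const_nhds (x := (2 * π : ℝ)) (f := atTop)).div
        (tendsto_const_nhds.add hg) (by norm_num : (1:ℝ) + 1 ≠ 0)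
      have h2 : 2 * π / (1 + 1) = π := by ring
      rw [h2] at h3
      exact h3
    have hB : Tendsto (fun x : ℝ =>
        2 * π * Real.log ((1 + Real.sqrt (1 - 4 / x ^ 2)) / 2)) atTop (𝓝 0) := by
      have hin : Tendsto (fun x : ℝ => (1 + Real.sqrt (1 - 4 / x ^ 2)) / 2) atTop (𝓝 1) := by
        have h4 := ((tendsto_const_nhds (x := (1:ℝ)) (f := atTop)).add hg).div_const 2
        norm_num at h4
        exact h4
      have hlog := (Real.continuousAt_log one_ne_zero).tendsto.comp hin
      rw [Real.log_one] at hlog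
      have := hlog.const_mul (2 * π)
      simpa using this
    have hE : Tendsto (fun x : ℝ => 2 * π / (1 + Real.sqrt (1 - 4 / x ^ 2)) - π
        + 2 * π * Real.log ((1 + Real.sqrt (1 - 4 / x ^ 2)) / 2)) atTop (𝓝 0) := by
      have := (hA.sub (tendsto_const_nhds (x := π))).add hB
      simpa using this
    apply hE.congr'
    filter_upwards [eventually_gt_atTop (2:ℝ)] with x hx
    have hx0 : (0:ℝ) < x := by linarith
    have hRsqx := sqR hx
    have hRposx := sqrtR_pos hx
    set Rx := Real.sqrt (x ^ 2 - 4) with hRx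
    have hgeq : Real.sqrt (1 - 4 / x ^ 2) = Rx / x := by
      rw [show 1 - 4 / x ^ 2 = (x ^ 2 - 4) / x ^ 2 by field_simp,
        Real.sqrt_div (sq4_pos hx).le, Real.sqrt_sq hx0.le]
    have hlogeq : Real.log ((1 + Rx / x) / 2) = Real.log ((x + Rx) / 2) - Real.log x := by
      rw [show (1 + Rx / x) / 2 = ((x + Rx) / 2) / x by
        rw [div_div, div_eq_div_iff (by norm_num) (by positivity)]; field_simp]
      exact Real.log_div (by positivity) hx0.ne'
    have halg : 2 * π / (1 + Rx / x) = π * x ^ 2 / 2 - π * x * Rx / 2 := by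
      have hden : (0:ℝ) < 1 + Rx / x := by positivity
      field_simp
      linear_combination hRsqx
    rw [hgeq, hlogeq, halg]
    simp only [hC]
    ring
  have tendD : Tendsto D atTop (𝓝 0) := by
    have h := T1.sub T2
    rw [sub_zero] at h
    apply h.congr
    intro x
    simp only [hD]
    ring
  have hDl : D l = 0 := by
    have h1 : Tendsto D atTop (𝓝 (D l)) := by
      apply Tendsto.congr' ?_ tendsto_const_nhds
      filter_upwards [eventually_ge_atTop l] with x hx
      exact (hconst x hx).symm
    exact tendsto_nhds_unique h1 tendD
  have hfin : Φ l = C l := by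
    have := sub_eq_zero.mp hDl
    simpa [hD] using this
  simpa [hΦ, hC] using hfin

lemma intervalIntegrable_maxsqrt (a b : ℝ) :
    IntervalIntegrable (fun s => Real.sqrt (max (s ^ 2 - 4) 0)) volume a b :=
  Continuous.intervalIntegrable (Real.continuous_sqrt.comp ((by fun_prop : Continuous
    fun s : ℝ => s ^ 2 - 4).max continuous_const)) a b

lemma V_tail_eq {m : ℝ} (hm : 2 < m) :
    (∫ s in (2:ℝ)..m, Real.sqrt (max (s ^ 2 - 4) 0))
      = m * Real.sqrt (m ^ 2 - 4) / 2
        - 2 * Real.log ((m + Real.sqrt (m ^ 2 - 4)) / 2) := by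
  set W : ℝ → ℝ := fun s => s * Real.sqrt (s ^ 2 - 4) / 2
    - 2 * Real.log ((s + Real.sqrt (s ^ 2 - 4)) / 2) with hW
  have hcont : ContinuousOn W (Icc 2 m) := by
    apply ContinuousOn.sub
    · exact ((continuousOn_id.mul (Real.continuous_sqrt.comp
        (by fun_prop : Continuous fun s : ℝ => s ^ 2 - 4)).continuousOn).div_const 2)
    · refine continuousOn_const.mul (ContinuousOn.log
        ((continuousOn_id.add (Real.continuous_sqrt.comp
          (by fun_prop : Continuous fun s : ℝ => s ^ 2 - 4)).continuousOn).div_const 2)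
        (fun s hs => ?_))
      have h2 : (2:ℝ) ≤ s := hs.1
      have hp : (0:ℝ) < (s + Real.sqrt (s ^ 2 - 4)) / 2 := by
        have := Real.sqrt_nonneg (s ^ 2 - 4); linarith
      exact hp.ne'
  have hderiv : ∀ x ∈ Ioo (2:ℝ) m,
      HasDerivAt W (Real.sqrt (max (x ^ 2 - 4) 0)) x := by
    intro x hx
    have hx2 : 2 < x := hx.1
    have hRpos := sqrtR_pos hx2
    have hRsq := sqR hx2
    set R := Real.sqrt (x ^ 2 - 4) with hR
    have dsq := sqrt_fun_hasDeriv hx2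
    have dA : HasDerivAt (fun s : ℝ => s * Real.sqrt (s ^ 2 - 4) / 2)
        ((1 * R + x * (x / R)) / 2) x := ((hasDerivAt_id x).mul dsq).div_const 2
    have dB : HasDerivAt (fun s : ℝ => 2 * Real.log ((s + Real.sqrt (s ^ 2 - 4)) / 2))
        (2 * ((1 + x / R) / 2 / ((x + R) / 2))) x := by
      have hpos : (0:ℝ) < (x + R) / 2 := by positivity
      exact ((((hasDerivAt_id x).add dsq).div_const 2).log hpos.ne').const_mul 2
    have := dA.sub dB
    refine this.congr_deriv (Eq.symm ?_)
    rw [max_eq_left (by nlinarith : (0:ℝ) ≤ x ^ 2 - 4), ← hR]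
    have hxR : x + R ≠ 0 := by positivity
    field_simp
    linear_combination (x + R) * hRsq
  have := intervalIntegral.integral_eq_sub_of_hasDeriv_right_of_le hm.le hcont
    (fun x hx => (hderiv x hx).hasDerivWithinAt) (intervalIntegrable_maxsqrt 2 m)
  rw [this]
  have hW2 : W 2 = 0 := by
    simp only [hW]
    rw [show (2:ℝ) ^ 2 - 4 = 0 by norm_num, Real.sqrt_zero]
    norm_num
  rw [hW2]
  simp only [hW]
  ring

lemma V_split {m : ℝ} (hm : 2 < m) :
    V m = ∫ s in (2:ℝ)..m, Real.sqrt (max (s ^ 2 - 4) 0) := by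
  have hm0 : (0:ℝ) < m := by linarith
  rw [V, abs_of_pos hm0,
    ← intervalIntegral.integral_add_adjacent_intervals
      (intervalIntegrable_maxsqrt 0 2) (intervalIntegrable_maxsqrt 2 m)]
  have h0 : (∫ s in (0:ℝ)..2, Real.sqrt (max (s ^ 2 - 4) 0)) = 0 := by
    rw [intervalIntegral.integral_congr (g := fun _ => (0:ℝ)) ?_]
    · simp
    · intro s hs
      rw [uIcc_of_le (by norm_num : (0:ℝ) ≤ 2)] at hs
      show Real.sqrt (max (s ^ 2 - 4) 0) = 0
      rw [max_eq_right (by nlinarith [hs.1, hs.2] : s ^ 2 - 4 ≤ 0), Real.sqrt_zero]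
  rw [h0, zero_add]

lemma V_pos {m : ℝ} (hm : 2 < m) : 0 < V m := by
  rw [V_split hm]
  apply intervalIntegral.intervalIntegral_pos_of_pos_on (intervalIntegrable_maxsqrt 2 m)
    ?_ hm
  intro x hx
  have hx2 : 2 < x := hx.1
  rw [max_eq_left (by nlinarith : (0:ℝ) ≤ x ^ 2 - 4)]
  exact Real.sqrt_pos.2 (by nlinarith)

/-- Outside the support, the effective log-potential relation: for `|λ| > 2`,
`λ²/4 − ∫_{−2}^{2} log|λ−s|·(1/(2π))√(4−s²) ds = (1/2)V(λ) + 1/2`, and in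
particular the left-hand side exceeds the constant value `1/2` attained on `[−2,2]`. -/
theorem semicircle_log_potential_outside (l : ℝ) (hl : 2 < |l|) :
    (l ^ 2 / 4
        - ∫ s in (-2 : ℝ)..2, Real.log |l - s| * (1 / (2 * π) * Real.sqrt (4 - s ^ 2))
      = 1 / 2 * V l + 1 / 2) ∧
    (l ^ 2 / 4
        - ∫ s in (-2 : ℝ)..2, Real.log |l - s| * (1 / (2 * π) * Real.sqrt (4 - s ^ 2))
      > 1 / 2) := by
  have hπ := Real.pi_pos
  set m := |l| with hm
  have hm2 : 2 < m := hl
  have hVm : V l = V m := by rw [V, V, hm, abs_abs]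
  have hint_eq : (∫ s in (-2:ℝ)..2, Real.log |l - s| * (1 / (2 * π) * Real.sqrt (4 - s ^ 2)))
      = ∫ s in (-2:ℝ)..2, Real.log |m - s| * (1 / (2 * π) * Real.sqrt (4 - s ^ 2)) := by
    rcases le_or_gt 0 l with h | h
    · rw [hm, abs_of_nonneg h]
    · rw [hm, abs_of_neg h]
      have hcn := intervalIntegral.integral_comp_neg (a := (-2:ℝ)) (b := 2)
        (fun s => Real.log |(-l) - s| * (1 / (2 * π) * Real.sqrt (4 - s ^ 2)))
      simp only [neg_neg] at hcn
      rw [← hcn]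
      apply intervalIntegral.integral_congr
      intro s _
      show Real.log |l - s| * (1 / (2 * π) * Real.sqrt (4 - s ^ 2))
        = Real.log |(-l) - (-s)| * (1 / (2 * π) * Real.sqrt (4 - (-s) ^ 2))
      rw [show (-l) - (-s) = -(l - s) by ring, abs_neg, show ((-s):ℝ) ^ 2 = s ^ 2 by ring]
  have hRpos := sqrtR_pos hm2
  set R := Real.sqrt (m ^ 2 - 4) with hR
  have hIm : (∫ s in (-2:ℝ)..2, Real.log |m - s| * (1 / (2 * π) * Real.sqrt (4 - s ^ 2)))
      = m ^ 2 / 4 - m * R / 4 + Real.log ((m + R) / 2) - 1 / 2 := by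
    rw [intervalIntegral.integral_congr
      (g := fun s => 1 / (2 * π) * (Real.log (m - s) * Real.sqrt (4 - s ^ 2))) ?_]
    · rw [intervalIntegral.integral_const_mul, phi_eq hm2, ← hR]
      field_simp
      ring
    · intro s hs
      rw [uIcc_of_le (by norm_num : (-2:ℝ) ≤ 2)] at hs
      have h1 : 0 < m - s := by have := hs.2; linarith
      show Real.log |m - s| * (1 / (2 * π) * Real.sqrt (4 - s ^ 2))
        = 1 / (2 * π) * (Real.log (m - s) * Real.sqrt (4 - s ^ 2))
      rw [abs_of_pos h1]; ring
  have hV : V l = m * R / 2 - 2 * Real.log ((m + R) / 2) := by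
    rw [hVm, V_split hm2, V_tail_eq hm2, ← hR]
  have hsq : l ^ 2 = m ^ 2 := (sq_abs l).symm
  have hVpos : 0 < V l := hVm ▸ V_pos hm2
  constructor
  · rw [hint_eq, hIm, hV, hsq]; ring
  · rw [hint_eq, hIm, hsq]
    linarith [hVpos, hV]
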